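/- Let q ∈ (0,1] and let g ∈ C([0,1], ℂ) with g(q) ≠ 0. Then the family (|ψ_{q,m}·g|²)_{m≥1} is not summable in the Banach space C([0,1], ℝ) with the supremum norm; equivalently, the partial sums ∑_{m=1}^{M} |ψ_{q,m}(t) g(t)|² do not converge uniformly on [0,1] as M → ∞. -/
import Mathlib


/-- `f q m t = max 0 (min 1 (m * (q - t)))`. -/
noncomputable def f (q : ℝ) (m : ℕ) (t : ℝ) : ℝ := max 0 (min 1 (m * (q - t)))

/-- `ψ q m t = sqrt (f q m t - f q (m-1) t)` (for `m ≥ 1`). -/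
noncomputable def ψ (q : ℝ) (m : ℕ) (t : ℝ) : ℝ := Real.sqrt (f q m t - f q (m - 1) t)

lemma continuous_ψ (q : ℝ) (m : ℕ) : Continuous (ψ q m) := by
  unfold ψ f; fun_prop

/-- `ψ q m` as a continuous complex-valued function on `[0,1]`. -/
noncomputable def ψCc (q : ℝ) (m : ℕ) : C(Set.Icc (0 : ℝ) 1, ℂ) :=
  ⟨fun t => (ψ q m t.val : ℂ),
    Complex.continuous_ofReal.comp ((continuous_ψ q m).comp continuous_subtype_val)⟩

/-- For `g : C([0,1], ℂ)`, the continuous real function `t ↦ |g t|²`. -/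
noncomputable def absSq (g : C(Set.Icc (0 : ℝ) 1, ℂ)) : C(Set.Icc (0 : ℝ) 1, ℝ) :=
  ⟨fun t => ‖g t‖ ^ 2, by fun_prop⟩

lemma f_mono (q t : ℝ) : Monotone (fun m : ℕ => f q m t) := by
  intro m n hmn
  rcases le_or_gt 0 (q - t) with h | h
  · simp only [f]
    have : (m : ℝ) * (q - t) ≤ (n : ℝ) * (q - t) := by
      apply mul_le_mul_of_nonneg_right _ h
      exact_mod_cast hmn
    exact max_le_max le_rfl (min_le_min le_rfl this)
  · have e : ∀ k : ℕ, f q k t = 0 := by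
      intro k
      unfold f
      have : (k : ℝ) * (q - t) ≤ 0 := mul_nonpos_of_nonneg_of_nonpos (by positivity) h.le
      rw [max_eq_left]
      exact (min_le_right _ _).trans this
    simp only; rw [e m, e n]

lemma f_zero (q t : ℝ) : f q 0 t = 0 := by simp [f]
lemma f_at_q (q : ℝ) (m : ℕ) : f q m q = 0 := by simp [f]
lemma f_eq_one (q t : ℝ) (m : ℕ) (h : 1 ≤ (m : ℝ) * (q - t)) : f q m t = 1 := by
  unfold f; rw [min_eq_left h, max_eq_right zero_le_one]
lemma ψ_sq (q t : ℝ) (m : ℕ) : (ψ q (m + 1) t) ^ 2 = f q (m + 1) t - f q m t := by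
  unfold ψ
  rw [Nat.add_sub_cancel, Real.sq_sqrt (sub_nonneg.mpr (f_mono q t (Nat.le_succ m)))]


/-- For `q ∈ (0,1]` and `g ∈ C([0,1], ℂ)` with `g(q) ≠ 0`, the family
`(|ψ_{q,m}·g|²)_{m ≥ 1}` is not summable in `C([0,1], ℝ)` with the supremum norm. -/
theorem stmt8 (q : ℝ) (hq : q ∈ Set.Ioc (0 : ℝ) 1) (g : C(Set.Icc (0 : ℝ) 1, ℂ))
    (hg : g ⟨q, Set.mem_Icc.mpr ⟨hq.1.le, hq.2⟩⟩ ≠ 0) :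
    ¬ Summable (fun m : ℕ => absSq (ψCc q (m + 1) * g)) := by
  intro hS
  set F : ℕ → C(Set.Icc (0 : ℝ) 1, ℝ) := fun m => absSq (ψCc q (m + 1) * g) with hF
  set S : C(Set.Icc (0 : ℝ) 1, ℝ) := ∑' m, F m with hSdef
  have hsum : HasSum F S := hS.hasSum
  -- evaluation at a point
  have heval : ∀ t : Set.Icc (0 : ℝ) 1, HasSum (fun m => F m t) (S t) := by
    intro t
    have hφ : Continuous (fun h : C(Set.Icc (0 : ℝ) 1, ℝ) => h t) :=
      continuous_eval_const t
    exact hsum.map (AddMonoidHom.mk' (fun h : C(Set.Icc (0 : ℝ) 1, ℝ) => h t)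
      (fun a b => rfl)) hφ
  -- value of each term
  have hFval : ∀ (m : ℕ) (t : Set.Icc (0 : ℝ) 1),
      F m t = (f q (m + 1) t.val - f q m t.val) * ‖g t‖ ^ 2 := by
    intro m t
    have : F m t = ‖(ψ q (m + 1) t.val : ℂ) * g t‖ ^ 2 := rfl
    rw [this, norm_mul, mul_pow, Complex.norm_real, Real.norm_eq_abs, sq_abs, ψ_sq]
  -- partial sums
  have hpart : ∀ (t : Set.Icc (0 : ℝ) 1) (M : ℕ),
      ∑ m ∈ Finset.range M, F m t = f q M t.val * ‖g t‖ ^ 2 := by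
    intro t M
    calc ∑ m ∈ Finset.range M, F m t
        = (∑ m ∈ Finset.range M, (f q (m + 1) t.val - f q m t.val)) * ‖g t‖ ^ 2 := by
          rw [Finset.sum_mul]; exact Finset.sum_congr rfl fun m _ => hFval m t
      _ = (f q M t.val - f q 0 t.val) * ‖g t‖ ^ 2 := by
          congr 1; exact Finset.sum_range_sub (fun m => f q m t.val) M
      _ = f q M t.val * ‖g t‖ ^ 2 := by rw [f_zero, sub_zero]
  have hqmem : q ∈ Set.Icc (0 : ℝ) 1 := Set.mem_Icc.mpr ⟨hq.1.le, hq.2⟩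
  -- S at q is 0
  have hSq : S ⟨q, hqmem⟩ = 0 := by
    have h1 := heval ⟨q, hqmem⟩
    have h2 : (fun m => F m ⟨q, hqmem⟩) = fun _ => (0 : ℝ) := by
      funext m; rw [hFval]; simp [f_at_q]
    rw [h2] at h1
    exact (hasSum_zero.unique h1).symm
  -- S at t < q is ‖g t‖²
  have hSlt : ∀ t : Set.Icc (0 : ℝ) 1, t.val < q → S t = ‖g t‖ ^ 2 := by
    intro t ht
    have h1 := (heval t).tendsto_sum_nat
    have h2 : Filter.Tendsto (fun M : ℕ => ∑ m ∈ Finset.range M, F m t)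
        Filter.atTop (nhds (‖g t‖ ^ 2)) := by
      apply Filter.Tendsto.congr' _ tendsto_const_nhds
      filter_upwards [Filter.eventually_atTop.mpr
        ⟨⌈(q - t.val)⁻¹⌉₊, fun M hM => hM⟩] with M hM
      rw [hpart t M, f_eq_one]
      · ring
      · have hpos : 0 < q - t.val := sub_pos.mpr ht
        rw [← div_le_iff₀ hpos] at *
        calc (1 : ℝ) / (q - t.val) = (q - t.val)⁻¹ := one_div _
          _ ≤ ⌈(q - t.val)⁻¹⌉₊ := Nat.le_ceil _
          _ ≤ M := Nat.cast_le.mpr hM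
    exact tendsto_nhds_unique h1 h2
  -- sequence approaching q from the left
  set u : ℕ → ℝ := fun n => q - q / (n + 2) with hu
  have humem : ∀ n, u n ∈ Set.Icc (0 : ℝ) 1 := by
    intro n
    constructor
    · have : q / (n + 2) ≤ q / 1 := by
        apply div_le_div_of_nonneg_left hq.1.le one_pos
        push_cast; linarith [Nat.cast_nonneg (α := ℝ) n]
      simp only [hu, div_one] at this ⊢; linarith
    · have : 0 < q / (n + 2) := div_pos hq.1 (by positivity)
      simp only [hu]; linarith [hq.2]
  have hult : ∀ n, u n < q := by
    intro n; have : 0 < q / (n + 2) := div_pos hq.1 (by positivity)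
    simp only [hu]; linarith
  have hutend : Filter.Tendsto u Filter.atTop (nhds q) := by
    have h0 : Filter.Tendsto (fun n : ℕ => q / (n + 2)) Filter.atTop (nhds 0) := by
      apply Filter.Tendsto.div_atTop tendsto_const_nhds
      apply Filter.tendsto_atTop_add_const_right
      exact tendsto_natCast_atTop_atTop
    have := ((tendsto_const_nhds : Filter.Tendsto (fun _ : ℕ => q) Filter.atTop (nhds q)).sub h0)
    simpa using this
  set U : ℕ → Set.Icc (0 : ℝ) 1 := fun n => ⟨u n, humem n⟩ with hU
  have hUtend : Filter.Tendsto U Filter.atTop (nhds ⟨q, hqmem⟩) :=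
    tendsto_subtype_rng.mpr hutend
  have hlim1 : Filter.Tendsto (fun n => S (U n)) Filter.atTop (nhds 0) := by
    have := (S.continuous.tendsto ⟨q, hqmem⟩).comp hUtend
    rwa [hSq] at this
  have hlim2 : Filter.Tendsto (fun n => S (U n)) Filter.atTop
      (nhds (‖g ⟨q, hqmem⟩‖ ^ 2)) := by
    have : (fun n => S (U n)) = fun n => ‖g (U n)‖ ^ 2 := by
      funext n; exact hSlt (U n) (hult n)
    rw [this]
    exact ((continuous_norm.comp g.continuous).pow 2).tendsto _ |>.comp hUtend
  have : ‖g ⟨q, hqmem⟩‖ ^ 2 = 0 := tendsto_nhds_unique hlim2 hlim1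
  exact hg (norm_eq_zero.mp (pow_eq_zero_iff two_ne_zero |>.mp this))
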